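/- Let A ∈ R^{d×d}, m ∈ N, ε ≥ 0, and let Ā be A with its diagonal set to zero. Let D^m(A) = (1/m) Σ_{k=1}^m X^k ⊙ (AX^k) with i.i.d. Rademacher vectors X^k. Then P(||D^m(A) − diag(A)||_∞ ≥ ε) ≤ 2d exp(−ε² m / (2 ||Ā||_{2→∞}²)). -/

import Mathlib

open scoped BigOperators ENNReal
open MeasureTheory ProbabilityTheory

/-- The Rademacher law on ℝ: `±1` with probability `1/2` each. -/
noncomputable def rademacherLaw : Measure ℝ :=
  (2 : ℝ≥0∞)⁻¹ • Measure.dirac (1 : ℝ) + (2 : ℝ≥0∞)⁻¹ • Measure.dirac (-1 : ℝ)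

lemma rad_compl : rademacherLaw ({1, -1} : Set ℝ)ᶜ = 0 := by
  have hs : MeasurableSet (({1, -1} : Set ℝ)ᶜ) :=
    ((Set.finite_singleton _).insert _).measurableSet.compl
  simp [rademacherLaw, Measure.dirac_apply' _ hs, Set.indicator_apply]

lemma integrable_dirac' {f : ℝ → ℝ} (hf : Measurable f) (a : ℝ) :
    Integrable f (Measure.dirac a) := by
  refine ⟨hf.aestronglyMeasurable, HasFiniteIntegral.of_bounded (C := ‖f a‖) ?_⟩
  rw [MeasureTheory.ae_dirac_eq]
  exact Filter.eventually_pure.2 le_rfl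

lemma rad_integral (f : ℝ → ℝ) (hf : Measurable f) :
    ∫ x, f x ∂rademacherLaw = (f 1 + f (-1)) / 2 := by
  have h1 := (integrable_dirac' hf 1).smul_measure (c := (2 : ℝ≥0∞)⁻¹) (by simp)
  have h2 := (integrable_dirac' hf (-1)).smul_measure (c := (2 : ℝ≥0∞)⁻¹) (by simp)
  rw [rademacherLaw, integral_add_measure h1 h2, integral_smul_measure, integral_smul_measure,
    integral_dirac, integral_dirac]
  simp only [ENNReal.toReal_inv, ENNReal.toReal_ofNat, smul_eq_mul]
  ring

lemma integral_prod_of_iIndepFun {Ω ι : Type*} [MeasurableSpace Ω] {μ : Measure Ω}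
    [IsProbabilityMeasure μ] (f : ι → Ω → ℝ)
    (hind : iIndepFun (m := fun _ => (inferInstance : MeasurableSpace ℝ)) f μ)
    (hm : ∀ i, Measurable (f i)) (s : Finset ι) :
    ∫ ω, ∏ i ∈ s, f i ω ∂μ = ∏ i ∈ s, ∫ ω, f i ω ∂μ := by
  classical
  induction s using Finset.induction_on with
  | empty => simp
  | @insert i s hi ih =>
    have h1 : IndepFun (∏ j ∈ s, f j) (f i) μ :=
      hind.indepFun_finset_prod_of_notMem hm hi
    have hsm : AEStronglyMeasurable (∏ j ∈ s, f j) μ := by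
      have h0 : Measurable fun ω => ∏ j ∈ s, f j ω :=
        Finset.measurable_prod s fun j _ => hm j
      have h0' : (∏ j ∈ s, f j) = fun ω => ∏ j ∈ s, f j ω := funext fun ω => Finset.prod_apply ω s f
      rw [h0']
      exact h0.aestronglyMeasurable
    have h2 := h1.symm.integral_mul_eq_mul_integral (hm i).aestronglyMeasurable hsm
    simp only [Finset.prod_insert hi]
    have h3 : (fun ω => f i ω * ∏ j ∈ s, f j ω) = (f i * ∏ j ∈ s, f j) := by
      ext ω; simp [Finset.prod_apply]
    calc ∫ ω, f i ω * ∏ j ∈ s, f j ω ∂μ = ∫ ω, (f i * ∏ j ∈ s, f j) ω ∂μ := by rw [h3]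
    _ = (∫ ω, f i ω ∂μ) * ∫ ω, (∏ j ∈ s, f j) ω ∂μ := h2
    _ = (∫ ω, f i ω ∂μ) * ∏ j ∈ s, ∫ ω, f j ω ∂μ := by
        rw [← ih]; congr 1; exact integral_congr_ae (Filter.Eventually.of_forall fun ω => by
          simp [Finset.prod_apply])
    _ = _ := rfl

lemma integrable_of_ae_bound {Ω : Type*} [MeasurableSpace Ω] {μ : Measure Ω}
    [IsFiniteMeasure μ] {f : Ω → ℝ} (hf : Measurable f) {C : ℝ}
    (h : ∀ᵐ ω ∂μ, ‖f ω‖ ≤ C) : Integrable f μ :=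
  ⟨hf.aestronglyMeasurable, HasFiniteIntegral.of_bounded h⟩

lemma hutch_mgf {Ω : Type*} [MeasurableSpace Ω] {μ : Measure Ω} [IsProbabilityMeasure μ]
    {d m : ℕ} {X : Ω → Fin m → Fin d → ℝ}
    (hmeas : ∀ k i, Measurable fun ω => X ω k i)
    (hindep : iIndepFun (m := fun _ : Fin m × Fin d => (inferInstance : MeasurableSpace ℝ))
      (fun p ω => X ω p.1 p.2) μ)
    (hlaw : ∀ k i, μ.map (fun ω => X ω k i) = rademacherLaw)
    (hG : ∀ᵐ ω ∂μ, ∀ k i', X ω k i' = 1 ∨ X ω k i' = -1)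
    (A : Matrix (Fin d) (Fin d) ℝ) (i : Fin d) (c : ℝ) :
    ∫ ω, Real.exp (c * ∑ k, ∑ j ∈ Finset.univ \ {i}, A i j * (X ω k i * X ω k j)) ∂μ
      ≤ Real.exp (c ^ 2 * m * (∑ j ∈ Finset.univ \ {i}, (A i j) ^ 2) / 2) := by
  classical
  set s : Finset (Fin d) := Finset.univ \ {i} with hs
  set sg : Finset (Fin m) → Fin m → ℝ := fun S k => if k ∈ S then (1:ℝ) else -1 with hsg
  set g : Finset (Fin m) → (Fin m × Fin d) → ℝ → ℝ := fun S p u =>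
    if p.2 = i then (1 + sg S p.1 * u) / 2 else Real.exp ((sg S p.1 * c * A i p.2) * u) with hg
  have hsg1 : ∀ S k, sg S k = 1 ∨ sg S k = -1 := by
    intro S k; by_cases h : k ∈ S <;> simp [hsg, h]
  have hmeasg : ∀ S p, Measurable (g S p) := by
    intro S p
    by_cases h : p.2 = i
    · simp only [hg, if_pos h]
      exact ((measurable_id.const_mul _).const_add 1).div_const 2
    · simp only [hg, if_neg h]
      exact (measurable_id.const_mul _).exp
  -- the pointwise expansion identity
  have hpt : ∀ ω, (∀ k i', X ω k i' = 1 ∨ X ω k i' = -1) →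
      Real.exp (c * ∑ k, ∑ j ∈ s, A i j * (X ω k i * X ω k j))
        = ∑ S ∈ (Finset.univ : Finset (Fin m)).powerset,
            ∏ p : Fin m × Fin d, g S p (X ω p.1 p.2) := by
    intro ω hω
    set W : Fin m → ℝ := fun k => ∑ j ∈ s, A i j * X ω k j with hW
    have h1 : c * ∑ k, ∑ j ∈ s, A i j * (X ω k i * X ω k j)
        = ∑ k, X ω k i * (c * W k) := by
      simp only [hW, Finset.mul_sum]
      exact Finset.sum_congr rfl fun k _ => Finset.sum_congr rfl fun j _ => by ring
    have h3 : ∀ k, Real.exp (X ω k i * (c * W k))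
        = (1 + 1 * X ω k i) / 2 * Real.exp (1 * c * W k)
          + (1 + (-1) * X ω k i) / 2 * Real.exp ((-1) * c * W k) := by
      intro k
      rcases hω k i with h | h <;> rw [h] <;> ring_nf <;> norm_num [Real.exp_neg]
    have h5 : ∀ S ∈ (Finset.univ : Finset (Fin m)).powerset,
        (∏ k ∈ S, ((1 + 1 * X ω k i) / 2 * Real.exp (1 * c * W k)))
          * ∏ k ∈ Finset.univ \ S, ((1 + (-1) * X ω k i) / 2 * Real.exp ((-1) * c * W k))
        = ∏ p : Fin m × Fin d, g S p (X ω p.1 p.2) := by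
      intro S _
      have hrhs : ∏ p : Fin m × Fin d, g S p (X ω p.1 p.2)
          = ∏ k, ((1 + sg S k * X ω k i) / 2 * Real.exp (sg S k * c * W k)) := by
        rw [Fintype.prod_prod_type]
        refine Finset.prod_congr rfl fun k _ => ?_
        rw [Finset.prod_eq_mul_prod_sdiff_singleton_of_mem (Finset.mem_univ i)
          (fun j => g S (k, j) (X ω k j))]
        congr 1
        · simp [hg]
        · calc ∏ j ∈ s, g S (k, j) (X ω k j)
              = ∏ j ∈ s, Real.exp ((sg S k * c * A i j) * X ω k j) :=
                Finset.prod_congr rfl fun j hj => by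
                  simp only [hg]
                  rw [if_neg (Finset.notMem_singleton.mp (Finset.mem_sdiff.mp hj).2)]
            _ = Real.exp (∑ j ∈ s, (sg S k * c * A i j) * X ω k j) :=
                (Real.exp_sum _ _).symm
            _ = Real.exp (sg S k * c * W k) := by
                congr 1
                simp only [hW, Finset.mul_sum]
                exact Finset.sum_congr rfl fun j _ => by ring
      rw [hrhs, ← Finset.prod_sdiff (Finset.subset_univ S), mul_comm]
      congr 1
      · exact Finset.prod_congr rfl fun k hk => by
          simp [hsg, (Finset.mem_sdiff.1 hk).2]
      · exact Finset.prod_congr rfl fun k hk => by simp [hsg, hk]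
    rw [h1, Real.exp_sum]
    calc ∏ k, Real.exp (X ω k i * (c * W k))
        = ∏ k, ((1 + 1 * X ω k i) / 2 * Real.exp (1 * c * W k)
            + (1 + (-1) * X ω k i) / 2 * Real.exp ((-1) * c * W k)) :=
          Finset.prod_congr rfl fun k _ => h3 k
      _ = ∑ S ∈ (Finset.univ : Finset (Fin m)).powerset,
            (∏ k ∈ S, ((1 + 1 * X ω k i) / 2 * Real.exp (1 * c * W k)))
              * ∏ k ∈ Finset.univ \ S, ((1 + (-1) * X ω k i) / 2 * Real.exp ((-1) * c * W k)) :=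
          Finset.prod_add _ _ _
      _ = _ := Finset.sum_congr rfl h5
  -- integrability of each expansion term
  have hint : ∀ S ∈ (Finset.univ : Finset (Fin m)).powerset,
      Integrable (fun ω => ∏ p : Fin m × Fin d, g S p (X ω p.1 p.2)) μ := by
    intro S _
    refine integrable_of_ae_bound
      (Finset.measurable_prod _ fun p _ => (hmeasg S p).comp (hmeas p.1 p.2))
      (C := ∏ p : Fin m × Fin d, max |g S p 1| |g S p (-1)|) ?_
    filter_upwards [hG] with ω hω
    rw [Real.norm_eq_abs, Finset.abs_prod]
    refine Finset.prod_le_prod (fun p _ => abs_nonneg _) fun p _ => ?_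
    rcases hω p.1 p.2 with h | h <;> rw [h]
    · exact le_max_left _ _
    · exact le_max_right _ _
  have hcongr : ∫ ω, Real.exp (c * ∑ k, ∑ j ∈ s, A i j * (X ω k i * X ω k j)) ∂μ
      = ∑ S ∈ (Finset.univ : Finset (Fin m)).powerset,
          ∫ ω, ∏ p : Fin m × Fin d, g S p (X ω p.1 p.2) ∂μ := by
    rw [← integral_finset_sum _ hint]
    exact integral_congr_ae (by filter_upwards [hG] with ω hω; exact hpt ω hω)
  have hone : ∀ S (p : Fin m × Fin d),
      ∫ ω, g S p (X ω p.1 p.2) ∂μ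
        = if p.2 = i then (2:ℝ)⁻¹ else Real.cosh (c * A i p.2) := by
    intro S p
    have hmap : ∫ ω, g S p (X ω p.1 p.2) ∂μ = ∫ u, g S p u ∂rademacherLaw := by
      rw [← hlaw p.1 p.2, integral_map (hmeas p.1 p.2).aemeasurable
        (hmeasg S p).aestronglyMeasurable]
    rw [hmap, rad_integral _ (hmeasg S p)]
    by_cases h : p.2 = i
    · simp only [hg, if_pos h]
      rcases hsg1 S p.1 with h' | h' <;> rw [h'] <;> norm_num
    · simp only [hg, if_neg h]
      rcases hsg1 S p.1 with h' | h' <;> rw [h']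
      · have e1 : (1:ℝ) * c * A i p.2 * 1 = c * A i p.2 := by ring
        have e2 : (1:ℝ) * c * A i p.2 * (-1) = -(c * A i p.2) := by ring
        rw [e1, e2, Real.cosh_eq]
      · have e1 : (-1:ℝ) * c * A i p.2 * 1 = -(c * A i p.2) := by ring
        have e2 : (-1:ℝ) * c * A i p.2 * (-1) = c * A i p.2 := by ring
        rw [e1, e2, Real.cosh_eq, add_comm]
  have hprodval : ∀ S ∈ (Finset.univ : Finset (Fin m)).powerset,
      (∫ ω, ∏ p : Fin m × Fin d, g S p (X ω p.1 p.2) ∂μ)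
        = ((2:ℝ)⁻¹ * ∏ j ∈ s, Real.cosh (c * A i j)) ^ m := by
    intro S hS
    have hii : iIndepFun (m := fun _ : Fin m × Fin d => (inferInstance : MeasurableSpace ℝ))
        (fun p ω => g S p (X ω p.1 p.2)) μ :=
      hindep.comp (fun p => g S p) (fun p => hmeasg S p)
    rw [integral_prod_of_iIndepFun _ hii
      (fun p => (hmeasg S p).comp (hmeas p.1 p.2)) Finset.univ]
    have h2 : ∀ p : Fin m × Fin d, ∫ ω, g S p (X ω p.1 p.2) ∂μ
        = if p.2 = i then (2:ℝ)⁻¹ else Real.cosh (c * A i p.2) := hone S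
    rw [Finset.prod_congr rfl fun p _ => h2 p]
    rw [Fintype.prod_prod_type]
    have h3 : ∀ k : Fin m,
        (∏ j, if j = i then (2:ℝ)⁻¹ else Real.cosh (c * A i j))
          = (2:ℝ)⁻¹ * ∏ j ∈ s, Real.cosh (c * A i j) := by
      intro k
      rw [Finset.prod_eq_mul_prod_sdiff_singleton_of_mem (Finset.mem_univ i)]
      congr 1
      · simp
      · exact Finset.prod_congr rfl fun j hj => by
          rw [if_neg (Finset.notMem_singleton.mp (Finset.mem_sdiff.mp hj).2)]
    rw [Finset.prod_congr rfl fun k _ => h3 k, Finset.prod_const, Finset.card_univ,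
      Fintype.card_fin]
  have hsum : ∫ ω, Real.exp (c * ∑ k, ∑ j ∈ s, A i j * (X ω k i * X ω k j)) ∂μ
      = (∏ j ∈ s, Real.cosh (c * A i j)) ^ m := by
    rw [hcongr, Finset.sum_congr rfl hprodval, Finset.sum_const, Finset.card_powerset,
      Finset.card_univ, Fintype.card_fin, nsmul_eq_mul]
    push_cast
    rw [mul_pow, ← mul_assoc, ← mul_pow]
    norm_num
  rw [hsum]
  have hC : ∏ j ∈ s, Real.cosh (c * A i j)
      ≤ Real.exp (c ^ 2 * (∑ j ∈ s, (A i j) ^ 2) / 2) := by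
    calc ∏ j ∈ s, Real.cosh (c * A i j)
        ≤ ∏ j ∈ s, Real.exp ((c * A i j) ^ 2 / 2) :=
          Finset.prod_le_prod (fun j _ => (Real.cosh_pos _).le)
            (fun j _ => Real.cosh_le_exp_half_sq _)
      _ = Real.exp (∑ j ∈ s, (c * A i j) ^ 2 / 2) := (Real.exp_sum _ _).symm
      _ = _ := by
          congr 1
          rw [Finset.mul_sum, Finset.sum_div]
          exact Finset.sum_congr rfl fun j _ => by ring
  have hCpos : 0 ≤ ∏ j ∈ s, Real.cosh (c * A i j) :=
    Finset.prod_nonneg fun j _ => (Real.cosh_pos _).le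
  calc (∏ j ∈ s, Real.cosh (c * A i j)) ^ m
      ≤ (Real.exp (c ^ 2 * (∑ j ∈ s, (A i j) ^ 2) / 2)) ^ m := pow_le_pow_left₀ hCpos hC m
    _ = Real.exp (c ^ 2 * m * (∑ j ∈ s, (A i j) ^ 2) / 2) := by
        rw [← Real.exp_nat_mul]
        congr 1
        ring

lemma chernoff_aux {Ω : Type*} [MeasurableSpace Ω] {μ : Measure Ω} [IsProbabilityMeasure μ]
    {Z : Ω → ℝ} {t a B : ℝ} (ht : 0 ≤ t)
    (hint : Integrable (fun ω => Real.exp (t * Z ω)) μ)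
    (hmgf : ∫ ω, Real.exp (t * Z ω) ∂μ ≤ B) :
    μ {ω | a ≤ Z ω} ≤ ENNReal.ofReal (Real.exp (-t * a) * B) := by
  have h := measure_ge_le_exp_mul_mgf (μ := μ) (X := Z) a ht hint
  have hm : mgf Z μ t = ∫ ω, Real.exp (t * Z ω) ∂μ := rfl
  have hB : (μ {ω | a ≤ Z ω}).toReal ≤ Real.exp (-t * a) * B := by
    refine h.trans ?_
    exact mul_le_mul_of_nonneg_left (hm.trans_le hmgf) (Real.exp_nonneg _)
  rw [← ENNReal.ofReal_toReal (measure_ne_top μ _)]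
  exact ENNReal.ofReal_le_ofReal hB

/-- Concentration in the max-norm for Hutchinson's diagonal estimator:
`P(‖Dᵐ(A) − diag(A)‖_∞ ≥ ε) ≤ 2d exp(−ε² m / (2 ‖Ā‖_{2→∞}²))`,
where `Ā` is `A` with its diagonal set to zero and
`‖Ā‖_{2→∞}² = max_i Σ_{j≠i} A_{ij}²`. -/
theorem hutchinson_max_norm_concentration {Ω : Type*} [MeasurableSpace Ω]
    (μ : Measure Ω) [IsProbabilityMeasure μ] (d m : ℕ) (hd : 0 < d) (hm : 0 < m)
    (X : Ω → Fin m → Fin d → ℝ)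
    (hmeas : ∀ k i, Measurable fun ω => X ω k i)
    (hindep : iIndepFun (m := fun _ : Fin m × Fin d => (inferInstance : MeasurableSpace ℝ))
      (fun p ω => X ω p.1 p.2) μ)
    (hlaw : ∀ k i, μ.map (fun ω => X ω k i) = rademacherLaw)
    (A : Matrix (Fin d) (Fin d) ℝ) (ε : ℝ) (hε : 0 ≤ ε) :
    haveI : NeZero d := ⟨hd.ne'⟩
    μ {ω | ε ≤ ⨆ i : Fin d,
          |(m : ℝ)⁻¹ * (∑ k, X ω k i * (∑ j, A i j * X ω k j)) - A i i|}
      ≤ ENNReal.ofReal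
          (2 * d * Real.exp
            (-(ε ^ 2 * m) /
              (2 * (⨆ i : Fin d, ∑ j ∈ Finset.univ \ {i}, (A i j) ^ 2)))) := by
  haveI : NeZero d := ⟨hd.ne'⟩
  haveI : Nonempty (Fin d) := ⟨⟨0, hd⟩⟩
  classical
  set σ2 : ℝ := ⨆ i : Fin d, ∑ j ∈ Finset.univ \ {i}, (A i j) ^ 2 with hσ2
  set Z : Fin d → Ω → ℝ :=
    fun i ω => ∑ k, ∑ j ∈ Finset.univ \ {i}, A i j * (X ω k i * X ω k j) with hZdef
  have hZmeas : ∀ i, Measurable (Z i) := fun i =>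
    Finset.measurable_sum _ fun k _ => Finset.measurable_sum _ fun j _ =>
      ((hmeas k i).mul (hmeas k j)).const_mul _
  have hG : ∀ᵐ ω ∂μ, ∀ k i', X ω k i' = 1 ∨ X ω k i' = -1 := by
    rw [MeasureTheory.ae_all_iff]
    intro k
    rw [MeasureTheory.ae_all_iff]
    intro i'
    have hs1 : MeasurableSet ({1, -1} : Set ℝ) :=
      ((Set.finite_singleton _).insert _).measurableSet
    have h0 : μ ((fun ω => X ω k i') ⁻¹' ({1, -1} : Set ℝ)ᶜ) = 0 := by
      rw [← Measure.map_apply (hmeas k i') hs1.compl, hlaw k i', rad_compl]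
    have hseteq : {ω | ¬ (X ω k i' = 1 ∨ X ω k i' = -1)}
        = (fun ω => X ω k i') ⁻¹' ({1, -1} : Set ℝ)ᶜ := by
      ext ω; simp [not_or]
    rw [ae_iff, hseteq]
    exact h0
  have hv : ∀ i : Fin d, (0:ℝ) ≤ ∑ j ∈ Finset.univ \ {i}, (A i j) ^ 2 :=
    fun i => Finset.sum_nonneg fun j _ => sq_nonneg _
  have hvle : ∀ i : Fin d, ∑ j ∈ Finset.univ \ {i}, (A i j) ^ 2 ≤ σ2 :=
    fun i => le_ciSup (f := fun i : Fin d => ∑ j ∈ Finset.univ \ {i}, (A i j) ^ 2)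
      (Set.Finite.bddAbove (Set.finite_range _)) i
  have hσ2nn : (0:ℝ) ≤ σ2 := le_trans (hv (Classical.arbitrary _)) (hvle _)
  set t : ℝ := ε / σ2 with htdef
  have ht : 0 ≤ t := div_nonneg hε hσ2nn
  set B : ℝ := Real.exp (-(ε ^ 2 * m) / (2 * σ2)) with hBdef
  have hexp : ∀ v : ℝ, 0 ≤ v → v ≤ σ2 →
      Real.exp (-t * (m * ε)) * Real.exp (t ^ 2 * m * v / 2) ≤ B := by
    intro v hv0 hvσ
    rw [← Real.exp_add, hBdef]
    apply Real.exp_le_exp.2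
    have key : -t * (m * ε) + t ^ 2 * m * σ2 / 2 = -(ε ^ 2 * m) / (2 * σ2) := by
      rcases eq_or_lt_of_le hσ2nn with h0 | h0
      · rw [htdef, ← h0]; simp
      · rw [htdef]; field_simp; ring
    have h2 : t ^ 2 * m * v / 2 ≤ t ^ 2 * m * σ2 / 2 := by
      gcongr
    linarith
  have hR : ∀ (i : Fin d) (c : ℝ), Integrable (fun ω => Real.exp (c * Z i ω)) μ := by
    intro i c
    refine integrable_of_ae_bound (((hZmeas i).const_mul c).exp)
      (C := Real.exp (|c| * ∑ k : Fin m, ∑ j ∈ Finset.univ \ {i}, |A i j|)) ?_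
    filter_upwards [hG] with ω hω
    rw [Real.norm_eq_abs, Real.abs_exp]
    apply Real.exp_le_exp.2
    calc c * Z i ω ≤ |c * Z i ω| := le_abs_self _
      _ = |c| * |Z i ω| := abs_mul _ _
      _ ≤ |c| * ∑ k : Fin m, ∑ j ∈ Finset.univ \ {i}, |A i j| := by
          refine mul_le_mul_of_nonneg_left ?_ (abs_nonneg c)
          refine (Finset.abs_sum_le_sum_abs _ _).trans ?_
          refine Finset.sum_le_sum fun k _ => ?_
          refine (Finset.abs_sum_le_sum_abs _ _).trans ?_
          refine Finset.sum_le_sum fun j _ => ?_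
          rw [abs_mul, abs_mul]
          rcases hω k i with h1 | h1 <;> rcases hω k j with h2 | h2 <;>
            rw [h1, h2] <;> norm_num
  have hmgfZ : ∀ (i : Fin d) (c : ℝ), ∫ ω, Real.exp (c * Z i ω) ∂μ
      ≤ Real.exp (c ^ 2 * m * (∑ j ∈ Finset.univ \ {i}, (A i j) ^ 2) / 2) :=
    fun i c => hutch_mgf hmeas hindep hlaw hG A i c
  have hcher : ∀ i : Fin d, μ {ω | m * ε ≤ Z i ω} ≤ ENNReal.ofReal B ∧
      μ {ω | m * ε ≤ -Z i ω} ≤ ENNReal.ofReal B := by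
    intro i
    constructor
    · exact le_trans (chernoff_aux ht (hR i t) (hmgfZ i t))
        (ENNReal.ofReal_le_ofReal (hexp _ (hv i) (hvle i)))
    · have hneg : Integrable (fun ω => Real.exp (t * -Z i ω)) μ := by
        have := hR i (-t); simpa [neg_mul, mul_neg] using this
      have hm2 : ∫ ω, Real.exp (t * -Z i ω) ∂μ
          ≤ Real.exp (t ^ 2 * m * (∑ j ∈ Finset.univ \ {i}, (A i j) ^ 2) / 2) := by
        have h := hmgfZ i (-t)
        rw [neg_sq] at h
        have heq : (fun ω => Real.exp (t * -Z i ω)) = fun ω => Real.exp (-t * Z i ω) := by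
          funext ω; ring_nf
        rw [heq]
        exact h
      exact le_trans (chernoff_aux (Z := fun ω => -Z i ω) ht hneg hm2)
        (ENNReal.ofReal_le_ofReal (hexp _ (hv i) (hvle i)))
  set E : Set Ω := {ω | ε ≤ ⨆ i : Fin d,
    |(m : ℝ)⁻¹ * (∑ k, X ω k i * (∑ j, A i j * X ω k j)) - A i i|} with hEdef
  have hsub : E ∩ {ω | ∀ k i', X ω k i' = 1 ∨ X ω k i' = -1}
      ⊆ ⋃ i : Fin d, ({ω | m * ε ≤ Z i ω} ∪ {ω | m * ε ≤ -Z i ω}) := by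
    rintro ω ⟨hω1, hω2⟩
    obtain ⟨i, hi⟩ := exists_eq_ciSup_of_finite
      (f := fun i : Fin d => |(m : ℝ)⁻¹ * (∑ k, X ω k i * (∑ j, A i j * X ω k j)) - A i i|)
    have hεi : ε ≤ |(m : ℝ)⁻¹ * (∑ k, X ω k i * (∑ j, A i j * X ω k j)) - A i i| := by
      rw [hi]; exact hω1
    have hk : ∀ k : Fin m, X ω k i * (∑ j, A i j * X ω k j)
        = A i i + ∑ j ∈ Finset.univ \ {i}, A i j * (X ω k i * X ω k j) := by
      intro k
      rw [Finset.sum_eq_sum_sdiff_singleton_add (Finset.mem_univ i) (fun j => A i j * X ω k j),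
        mul_add, Finset.mul_sum]
      have hx : X ω k i * (A i i * X ω k i) = A i i := by
        rcases hω2 k i with h | h <;> rw [h] <;> ring
      rw [hx, add_comm]
      congr 1
      exact Finset.sum_congr rfl fun j _ => by ring
    have hSZ : (∑ k, X ω k i * (∑ j, A i j * X ω k j)) = m * A i i + Z i ω := by
      rw [Finset.sum_congr rfl fun k _ => hk k, Finset.sum_add_distrib, Finset.sum_const,
        Finset.card_univ, Fintype.card_fin, nsmul_eq_mul]
    have hmpos : (0:ℝ) < m := by exact_mod_cast hm
    have habs : m * ε ≤ |Z i ω| := by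
      have heq2 : (m : ℝ)⁻¹ * (∑ k, X ω k i * (∑ j, A i j * X ω k j)) - A i i
          = (m : ℝ)⁻¹ * Z i ω := by
        rw [hSZ]; field_simp; ring
      rw [heq2, abs_mul, abs_inv, abs_of_pos hmpos] at hεi
      calc (m : ℝ) * ε ≤ m * ((m : ℝ)⁻¹ * |Z i ω|) :=
          mul_le_mul_of_nonneg_left hεi hmpos.le
        _ = |Z i ω| := by field_simp
    rcases le_abs.1 habs with h | h
    · exact Set.mem_iUnion.2 ⟨i, Or.inl h⟩
    · exact Set.mem_iUnion.2 ⟨i, Or.inr h⟩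
  have hGc : μ {ω | ¬ ∀ k i', X ω k i' = 1 ∨ X ω k i' = -1} = 0 := ae_iff.1 hG
  have hBnn : (0:ℝ) ≤ B := Real.exp_nonneg _
  calc μ E ≤ μ ((E ∩ {ω | ∀ k i', X ω k i' = 1 ∨ X ω k i' = -1})
        ∪ {ω | ¬ ∀ k i', X ω k i' = 1 ∨ X ω k i' = -1}) := by
        refine measure_mono fun ω hω => ?_
        by_cases h : ∀ k i', X ω k i' = 1 ∨ X ω k i' = -1
        · exact Or.inl ⟨hω, h⟩
        · exact Or.inr h
    _ ≤ μ (E ∩ {ω | ∀ k i', X ω k i' = 1 ∨ X ω k i' = -1})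
        + μ {ω | ¬ ∀ k i', X ω k i' = 1 ∨ X ω k i' = -1} := measure_union_le _ _
    _ = μ (E ∩ {ω | ∀ k i', X ω k i' = 1 ∨ X ω k i' = -1}) := by rw [hGc, add_zero]
    _ ≤ μ (⋃ i : Fin d, ({ω | m * ε ≤ Z i ω} ∪ {ω | m * ε ≤ -Z i ω})) := measure_mono hsub
    _ ≤ ∑' i : Fin d, μ ({ω | m * ε ≤ Z i ω} ∪ {ω | m * ε ≤ -Z i ω}) := measure_iUnion_le _
    _ = ∑ i : Fin d, μ ({ω | m * ε ≤ Z i ω} ∪ {ω | m * ε ≤ -Z i ω}) := tsum_fintype _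
    _ ≤ ∑ _i : Fin d, (ENNReal.ofReal B + ENNReal.ofReal B) :=
        Finset.sum_le_sum fun i _ =>
          (measure_union_le _ _).trans (add_le_add (hcher i).1 (hcher i).2)
    _ = (d : ℝ≥0∞) * (ENNReal.ofReal B + ENNReal.ofReal B) := by
        rw [Finset.sum_const, Finset.card_univ, Fintype.card_fin, nsmul_eq_mul]
    _ ≤ ENNReal.ofReal (2 * d * B) := by
        rw [← ENNReal.ofReal_add hBnn hBnn, ← ENNReal.ofReal_natCast d,
          ← ENNReal.ofReal_mul (by positivity)]
        apply ENNReal.ofReal_le_ofReal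
        nlinarith [hBnn]
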